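/- Let Λ be a commutative ring with (2g)! invertible, and V = ⊕_{i=-g}^{g} V_i an sl₂-module as above. Then for every integer n with 1 ≤ n ≤ g, the submodule V_n[f] := {v ∈ V_n : f(v) = 0} is zero. -/
import Mathlib


theorem stmt_8 (Λ : Type*) [CommRing Λ] (g : ℕ) (hg : 1 ≤ g)
    (hΛ : IsUnit ((Nat.factorial (2 * g) : Λ)))
    (M : Type*) [AddCommGroup M] [Module Λ M]
    (V : ℤ → Submodule Λ M)
    (hdirect : DirectSum.IsInternal V)
    (hbound : ∀ i : ℤ, (g : ℤ) < |i| → V i = ⊥)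
    (e h f : Module.End Λ M)
    (he : ∀ i : ℤ, ∀ v ∈ V i, e v ∈ V (i + 2))
    (hf : ∀ i : ℤ, ∀ v ∈ V i, f v ∈ V (i - 2))
    (hh : ∀ i : ℤ, ∀ v ∈ V i, h v = i • v)
    (hefh : e * f - f * e = h)
    (n : ℕ) (hn1 : 1 ≤ n) (hng : n ≤ g) :
    ∀ v ∈ V (n : ℤ), f v = 0 → v = 0 := by
  intro v hv hfv
  -- every integer 1 ≤ m ≤ 2g is a unit in Λ
  have hunit : ∀ m : ℕ, 1 ≤ m → m ≤ 2 * g → IsUnit ((m : Λ)) := by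
    intro m h1 h2
    exact isUnit_of_dvd_unit (Nat.cast_dvd_cast (Nat.dvd_factorial h1 h2)) hΛ
  -- commutator relation on elements
  have hcomm : ∀ w : M, f (e w) = e (f w) - h w := by
    intro w
    have h1 := congrArg (fun φ : Module.End Λ M => φ w) hefh
    simp only [LinearMap.sub_apply, Module.End.mul_apply] at h1
    rw [← h1]; abel
  -- e^k v lies in V (n + 2k)
  have hmem : ∀ k : ℕ, (e ^ k) v ∈ V ((n : ℤ) + 2 * k) := by
    intro k
    induction k with
    | zero => simpa using hv
    | succ k ih =>
      have h2 : (e ^ (k + 1)) v ∈ V ((n : ℤ) + 2 * k + 2) := by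
        simpa [pow_succ', Module.End.mul_apply] using he _ _ ih
      have h3 : (n : ℤ) + 2 * ((k : ℤ) + 1) = (n : ℤ) + 2 * k + 2 := by ring
      rw [show ((k + 1 : ℕ) : ℤ) = (k : ℤ) + 1 by push_cast; ring, h3]
      exact h2
  -- the key identity: f (e^{k+1} v) = -((k+1)(n+k)) • e^k v
  have hid : ∀ k : ℕ, f ((e ^ (k + 1)) v) = -((((k + 1) * (n + k) : ℕ)) : ℤ) • (e ^ k) v := by
    intro k
    induction k with
    | zero =>
      have hh0 : h v = (n : ℤ) • v := hh _ _ hv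
      simp [pow_succ', Module.End.mul_apply, hcomm, hfv, hh0]
    | succ k ih =>
      have hstep : f ((e ^ (k + 2)) v) = e (f ((e ^ (k + 1)) v)) - h ((e ^ (k + 1)) v) := by
        have : (e ^ (k + 2)) v = e ((e ^ (k + 1)) v) := by
          rw [pow_succ', Module.End.mul_apply]
        rw [this, hcomm]
      have hhk : h ((e ^ (k + 1)) v) = ((n : ℤ) + 2 * (k + 1)) • (e ^ (k + 1)) v :=
        hh _ _ (hmem (k + 1))
      rw [hstep, ih, map_zsmul, hhk]
      have hee : e ((e ^ k) v) = (e ^ (k + 1)) v := by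
        rw [pow_succ', Module.End.mul_apply]
      rw [hee, ← sub_smul]
      congr 1
      push_cast; ring
  -- descent: e^{k+1} v = 0 → e^k v = 0
  have hdesc : ∀ k : ℕ, (e ^ (k + 1)) v = 0 → (e ^ k) v = 0 := by
    intro k hk0
    by_cases hz : (e ^ k) v = 0
    · exact hz
    · exfalso
      have hle : (n : ℤ) + 2 * k ≤ (g : ℤ) := by
        by_contra hgt
        push_neg at hgt
        have hb : V ((n : ℤ) + 2 * k) = ⊥ := by
          apply hbound
          rw [abs_of_nonneg (by positivity)]
          exact hgt
        exact hz (by simpa [hb] using hmem k)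
      have hleN : n + 2 * k ≤ g := by exact_mod_cast hle
      have heq : ((((k + 1) * (n + k) : ℕ)) : ℤ) • (e ^ k) v = 0 := by
        have h3 := hid k
        rw [hk0, map_zero] at h3
        rw [← neg_eq_zero, ← neg_smul]
        exact h3.symm
      have heqΛ : ((((k + 1) * (n + k) : ℕ)) : Λ) • (e ^ k) v = 0 := by
        rw [Nat.cast_smul_eq_nsmul] at heq ⊢
        exact heq
      have hu : IsUnit ((((k + 1) * (n + k) : ℕ)) : Λ) := by
        have h4 : (((k + 1) * (n + k) : ℕ) : Λ) = ((k + 1 : ℕ) : Λ) * ((n + k : ℕ) : Λ) := by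
          push_cast; ring
        rw [h4]
        exact (hunit (k + 1) (by omega) (by omega)).mul (hunit (n + k) (by omega) (by omega))
      obtain ⟨u, hu'⟩ := hu
      have h5 := congrArg (fun x => (↑u⁻¹ : Λ) • x) heqΛ
      simp only [smul_smul, ← hu', Units.inv_mul, one_smul, smul_zero] at h5
      exact hz h5
  -- e^g v = 0 since it lives in V (n + 2g) = ⊥
  have hg0 : (e ^ g) v = 0 := by
    have hb : V ((n : ℤ) + 2 * g) = ⊥ := by
      apply hbound
      rw [abs_of_nonneg (by positivity)]
      push_cast; omega
    simpa [hb] using hmem g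
  -- descend all the way to v
  have key : ∀ k : ℕ, (e ^ k) v = 0 → v = 0 := by
    intro k
    induction k with
    | zero => intro hk; simpa using hk
    | succ k ih => intro hk; exact ih (hdesc k hk)
  exact key g hg0
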